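/- Let G be a graph with maximum degree Δ ≥ 2. Suppose S is a set of inner vertices of G^{3/3} such that for each branch vertex v, at most t of the inner vertices adjacent to v in G^{1/3} lie in S. Then the subgraph of G^{3/3} induced on S can be properly coloured with at most 3t colours. -/

import Mathlib

open SimpleGraph

/-- Data for an inner vertex of the `n`-th subdivision: it lies on the subdivided
edge `u w` at distance `i` from `u` (so `1 ≤ i ≤ n-1`). -/
structure SubdivPre {V : Type} (G : SimpleGraph V) (n : ℕ) where
  u : V
  w : V
  i : ℕ
  adj : G.Adj u w
  hi1 : 1 ≤ i
  hi2 : i ≤ n - 1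

/-- `(u,w,i)` and `(w,u,n-i)` describe the same inner vertex. -/
def SubdivRel {V : Type} (G : SimpleGraph V) (n : ℕ) (p q : SubdivPre G n) : Prop :=
  p.u = q.w ∧ p.w = q.u ∧ p.i + q.i = n

/-- The inner vertices of the `n`-th subdivision of `G`. -/
def SubdivInner {V : Type} (G : SimpleGraph V) (n : ℕ) : Type := Quot (SubdivRel G n)

/-- Vertices of the `n`-th subdivision: branch vertices plus inner vertices. -/
def SubdivV {V : Type} (G : SimpleGraph V) (n : ℕ) : Type := V ⊕ SubdivInner G n

def subdivAdj {V : Type} (G : SimpleGraph V) (n : ℕ) : SubdivV G n → SubdivV G n → Prop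
  | Sum.inl _, Sum.inl _ => False
  | Sum.inl a, Sum.inr q => ∃ p : SubdivPre G n, Quot.mk _ p = q ∧
      ((p.u = a ∧ p.i = 1) ∨ (p.w = a ∧ p.i = n - 1))
  | Sum.inr q, Sum.inl a => ∃ p : SubdivPre G n, Quot.mk _ p = q ∧
      ((p.u = a ∧ p.i = 1) ∨ (p.w = a ∧ p.i = n - 1))
  | Sum.inr q, Sum.inr q' => ∃ p p' : SubdivPre G n, Quot.mk _ p = q ∧ Quot.mk _ p' = q' ∧
      p.u = p'.u ∧ p.w = p'.w ∧ (p.i + 1 = p'.i ∨ p'.i + 1 = p.i)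

/-- The `n`-th subdivision `G^{1/n}` of `G`: every edge is replaced by a path of length `n`. -/
def subdivision {V : Type} (G : SimpleGraph V) (n : ℕ) : SimpleGraph (SubdivV G n) where
  Adj x y := x ≠ y ∧ subdivAdj G n x y
  symm := ⟨by
    rintro x y ⟨hne, h⟩
    refine ⟨hne.symm, ?_⟩
    match x, y, h with
    | Sum.inl a, Sum.inr q, h => exact h
    | Sum.inr q, Sum.inl a, h => exact h
    | Sum.inr q, Sum.inr q', ⟨p, p', h1, h2, h3, h4, h5⟩ =>
        exact ⟨p', p, h2, h1, h3.symm, h4.symm, h5.symm⟩⟩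
  loopless := ⟨fun x h => h.1 rfl⟩

/-- The `m`-th power of a graph: join vertices at distance at most `m`. -/
def gpow {α : Type} (H : SimpleGraph α) (m : ℕ) : SimpleGraph α where
  Adj x y := x ≠ y ∧ H.Reachable x y ∧ H.dist x y ≤ m
  symm := ⟨by
    rintro x y ⟨h1, h2, h3⟩
    exact ⟨h1.symm, h2.symm, by rwa [SimpleGraph.dist_comm]⟩⟩
  loopless := ⟨fun x h => h.1 rfl⟩

section Part1
variable {V : Type} {G : SimpleGraph V}

lemma SubdivPre.ext' {n : ℕ} {p q : SubdivPre G n} (hu : p.u = q.u) (hw : p.w = q.w)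
    (hi : p.i = q.i) : p = q := by
  cases p; cases q; simp_all

noncomputable def ihead : SubdivInner G 3 → V :=
  Quot.lift (fun p => if p.i = 1 then p.u else p.w) (by
    rintro p q ⟨h1, h2, h3⟩
    have hp1 := p.hi1; have hp2 := p.hi2; have hq1 := q.hi1; have hq2 := q.hi2
    by_cases hp : p.i = 1
    · have hq : q.i = 2 := by omega
      simp [hp, hq, h1]
    · have hp' : p.i = 2 := by omega
      have hq : q.i = 1 := by omega
      simp [hp', hq, h2])

noncomputable def itail : SubdivInner G 3 → V :=
  Quot.lift (fun p => if p.i = 1 then p.w else p.u) (by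
    rintro p q ⟨h1, h2, h3⟩
    have hp1 := p.hi1; have hp2 := p.hi2; have hq1 := q.hi1; have hq2 := q.hi2
    by_cases hp : p.i = 1
    · have hq : q.i = 2 := by omega
      simp [hp, hq, h2]
    · have hp' : p.i = 2 := by omega
      have hq : q.i = 1 := by omega
      simp [hp', hq, h1])

lemma iadj (q : SubdivInner G 3) : G.Adj (ihead q) (itail q) := by
  induction q using Quot.ind with
  | _ p =>
    simp only [ihead, itail]
    split
    · exact p.adj
    · exact p.adj.symm

lemma ihead_ne_itail (q : SubdivInner G 3) : ihead q ≠ itail q := (iadj q).ne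

lemma exists_rep (q : SubdivInner G 3) :
    ∃ p : SubdivPre G 3, Quot.mk _ p = q ∧ p.u = ihead q ∧ p.w = itail q ∧ p.i = 1 := by
  induction q using Quot.ind with
  | _ p =>
    by_cases hp : p.i = 1
    · exact ⟨p, rfl, by simp [ihead, hp], by simp [itail, hp], hp⟩
    · have hp1 := p.hi1; have hp2 := p.hi2
      have hp' : p.i = 2 := by omega
      refine ⟨⟨p.w, p.u, 1, p.adj.symm, le_rfl, by norm_num⟩, ?_, ?_, ?_, rfl⟩
      · refine Quot.sound ⟨rfl, rfl, ?_⟩; show 1 + p.i = 3; omega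
      · simp [ihead, hp']
      · simp [itail, hp']

lemma inner_ext {q q' : SubdivInner G 3} (h1 : ihead q = ihead q') (h2 : itail q = itail q') :
    q = q' := by
  obtain ⟨p, hp, hu, hw, hi⟩ := exists_rep q
  obtain ⟨p', hp', hu', hw', hi'⟩ := exists_rep q'
  rw [← hp, ← hp']
  congr 1
  exact SubdivPre.ext' (by rw [hu, hu', h1]) (by rw [hw, hw', h2]) (by rw [hi, hi'])

end Part1

section Part2
variable {V : Type} {G : SimpleGraph V}

/-- ihead is computed from any representative. -/
lemma ihead_mk (p : SubdivPre G 3) (hp : p.i = 1) : ihead (Quot.mk _ p) = p.u := by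
  simp [ihead, hp]

lemma ihead_mk2 (p : SubdivPre G 3) (hp : p.i = 2) : ihead (Quot.mk _ p) = p.w := by
  simp [ihead, hp]

lemma itail_mk (p : SubdivPre G 3) (hp : p.i = 1) : itail (Quot.mk _ p) = p.w := by
  simp [itail, hp]

lemma itail_mk2 (p : SubdivPre G 3) (hp : p.i = 2) : itail (Quot.mk _ p) = p.u := by
  simp [itail, hp]

/-- branch–inner adjacency in the subdivision means the branch vertex is the head. -/
lemma branch_inner {a : V} {q : SubdivInner G 3} (h : subdivAdj G 3 (Sum.inl a) (Sum.inr q)) :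
    ihead q = a := by
  obtain ⟨p, hp, hcase⟩ := h
  rcases hcase with ⟨hu, hi⟩ | ⟨hw, hi⟩
  · rw [← hp, ihead_mk p hi, hu]
  · rw [← hp, ihead_mk2 p hi, hw]

lemma branch_inner' {a : V} {q : SubdivInner G 3} (h : subdivAdj G 3 (Sum.inr q) (Sum.inl a)) :
    ihead q = a := by
  obtain ⟨p, hp, hcase⟩ := h
  rcases hcase with ⟨hu, hi⟩ | ⟨hw, hi⟩
  · rw [← hp, ihead_mk p hi, hu]
  · rw [← hp, ihead_mk2 p hi, hw]

lemma branch_inner_iff {a : V} {q : SubdivInner G 3} :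
    subdivAdj G 3 (Sum.inl a) (Sum.inr q) ↔ ihead q = a := by
  constructor
  · exact branch_inner
  · intro h
    obtain ⟨p, hp, hu, hw, hi⟩ := exists_rep q
    exact ⟨p, hp, Or.inl ⟨by rw [hu, h], hi⟩⟩

/-- inner–inner adjacency means partner: head/tail swap. -/
lemma inner_inner {q q' : SubdivInner G 3} (h : subdivAdj G 3 (Sum.inr q) (Sum.inr q')) :
    ihead q = itail q' ∧ itail q = ihead q' := by
  obtain ⟨p, p', hp, hp', hu, hw, hi⟩ := h
  have h1 := p.hi1; have h2 := p.hi2; have h1' := p'.hi1; have h2' := p'.hi2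
  rcases hi with hi | hi
  · have hpi : p.i = 1 := by omega
    have hpi' : p'.i = 2 := by omega
    rw [← hp, ← hp', ihead_mk p hpi, itail_mk p hpi, ihead_mk2 p' hpi', itail_mk2 p' hpi']
    exact ⟨hu, hw⟩
  · have hpi : p.i = 2 := by omega
    have hpi' : p'.i = 1 := by omega
    rw [← hp, ← hp', ihead_mk2 p hpi, itail_mk2 p hpi, ihead_mk p' hpi', itail_mk p' hpi']
    exact ⟨hw.symm ▸ hw, hu⟩

/-- walks of length ≤ 3 decompose -/
lemma walk3 {W : Type} {H : SimpleGraph W} {a b : W} (p : H.Walk a b) (h : p.length ≤ 3) :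
    a = b ∨ H.Adj a b ∨ (∃ x, H.Adj a x ∧ H.Adj x b) ∨
      (∃ x y, H.Adj a x ∧ H.Adj x y ∧ H.Adj y b) := by
  match p with
  | .nil => exact Or.inl rfl
  | .cons h1 .nil => exact Or.inr (Or.inl h1)
  | .cons h1 (.cons h2 .nil) => exact Or.inr (Or.inr (Or.inl ⟨_, h1, h2⟩))
  | .cons h1 (.cons h2 (.cons h3 .nil)) => exact Or.inr (Or.inr (Or.inr ⟨_, _, h1, h2, h3⟩))
  | .cons _ (.cons _ (.cons _ (.cons _ _))) => simp [SimpleGraph.Walk.length_cons] at h; omega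

/-- The key conflict structure of adjacency in the cube of the subdivision. -/
lemma cube_conflict {q q' : SubdivInner G 3}
    (h : (gpow (subdivision G 3) 3).Adj (Sum.inr q) (Sum.inr q')) :
    q ≠ q' ∧ (ihead q = ihead q' ∨ ihead q = itail q' ∨ ihead q' = itail q) := by
  obtain ⟨hne, hr, hd⟩ := h
  have hqq : q ≠ q' := fun h => hne (by rw [h])
  refine ⟨hqq, ?_⟩
  obtain ⟨w, hw⟩ := hr.exists_walk_length_eq_dist
  have hlen : w.length ≤ 3 := by omega
  rcases walk3 w hlen with heq | hadj | ⟨x, hax, hxb⟩ | ⟨x, y, hax, hxy, hyb⟩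
  · exact absurd heq hne
  · exact Or.inr (Or.inl (inner_inner hadj.2).1)
  · match x with
    | Sum.inl a =>
      exact Or.inl ((branch_inner' hax.2).trans (branch_inner hxb.2).symm)
    | Sum.inr r =>
      have h1 := inner_inner hax.2
      have h2 := inner_inner hxb.2
      exact Or.inl (h1.1.trans h2.2)
  · match x, y with
    | Sum.inl a, Sum.inl b => exact absurd hxy.2 (by simp [subdivAdj])
    | Sum.inl a, Sum.inr r =>
      have h1 := branch_inner' hax.2
      have h2 := branch_inner hxy.2
      have h3 := inner_inner hyb.2
      exact Or.inr (Or.inl ((h1.trans h2.symm).trans h3.1))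
    | Sum.inr r, Sum.inl b =>
      have h1 := inner_inner hax.2
      have h2 := branch_inner' hxy.2
      have h3 := branch_inner hyb.2
      exact Or.inr (Or.inr (h3.trans (h2.symm.trans h1.2.symm)))
    | Sum.inr r, Sum.inr r' =>
      have h1 := inner_inner hax.2
      have h2 := inner_inner hxy.2
      have hq : r' = q := inner_ext (h1.1.trans h2.2).symm (h2.1.symm.trans h1.2.symm)
      have h3 := inner_inner hyb.2
      rw [hq] at h3
      exact Or.inr (Or.inl h3.1)

end Part2

lemma funcol_aux : ∀ (n : ℕ) (α : Type) [Fintype α] (g : α → α), Fintype.card α ≤ n →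
    ∃ f : α → Fin 3, ∀ v, g v ≠ v → f v ≠ f (g v) := by
  intro n
  induction n with
  | zero =>
    intro α _ g hcard
    have hempty : IsEmpty α := Fintype.card_eq_zero_iff.mp (le_antisymm hcard (Nat.zero_le _))
    exact ⟨fun v => (hempty.false v).elim, fun v => (hempty.false v).elim⟩
  | succ n ih =>
    intro α _ g hcard
    classical
    by_cases hsurj : Function.Surjective g
    · by_cases htriv : ∀ v, g v = v
      · exact ⟨fun _ => 0, fun v hv => absurd (htriv v) hv⟩
      push_neg at htriv
      obtain ⟨v₀, hv₀⟩ := htriv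
      have hinj : Function.Injective g := Finite.injective_iff_surjective.mpr hsurj
      have hper : v₀ ∈ Function.periodicPts g := by
        obtain ⟨i, j, hne, hij⟩ := Finite.exists_ne_map_eq_of_infinite (fun k : ℕ => g^[k] v₀)
        wlog hlt : i < j generalizing i j
        · exact this j i hne.symm hij.symm (by omega)
        refine Function.mk_mem_periodicPts (n := j - i) (by omega) ?_
        have : g^[i] (g^[j-i] v₀) = g^[i] v₀ := by
          rw [← Function.iterate_add_apply]
          have : i + (j - i) = j := by omega
          rw [this]; exact hij.symm
        exact (hinj.iterate i) this
      set m := Function.minimalPeriod g v₀ with hm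
      have hm_pos : 0 < m := Function.minimalPeriod_pos_of_mem_periodicPts hper
      have hmit : g^[m] v₀ = v₀ := Function.iterate_minimalPeriod
      have hm2 : 2 ≤ m := by
        by_contra h
        have hm1 : m = 1 := by omega
        rw [hm1] at hmit
        simp at hmit
        exact hv₀ hmit
      set O : Set α := {x | ∃ k, k < m ∧ g^[k] v₀ = x} with hO
      have hv₀O : v₀ ∈ O := ⟨0, hm_pos, rfl⟩
      have hO_pre : ∀ x, g x ∈ O → x ∈ O := by
        rintro x ⟨k, hk, hgk⟩
        rcases Nat.eq_zero_or_pos k with rfl | hkpos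
        · simp only [Function.iterate_zero, id] at hgk
          have h1 : g^[m-1+1] v₀ = g (g^[m-1] v₀) := Function.iterate_succ_apply' g (m-1) v₀
          rw [show m-1+1 = m from by omega] at h1
          have h2 : g x = g (g^[m-1] v₀) := hgk.symm.trans (hmit.symm.trans h1)
          exact ⟨m - 1, by omega, (hinj h2).symm⟩
        · have h1 : g^[k-1+1] v₀ = g (g^[k-1] v₀) := Function.iterate_succ_apply' g (k-1) v₀
          rw [show k-1+1 = k from by omega] at h1
          have h2 : g x = g (g^[k-1] v₀) := hgk.symm.trans h1
          exact ⟨k - 1, by omega, (hinj h2).symm⟩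
      have hO_g : ∀ x, x ∈ O → g x ∈ O := by
        rintro x ⟨k, hk, hgk⟩
        have h1 : g^[k+1] v₀ = g (g^[k] v₀) := Function.iterate_succ_apply' g k v₀
        rw [hgk] at h1
        rcases Nat.lt_or_ge (k+1) m with h | h
        · exact ⟨k + 1, h, h1⟩
        · have hkm : k + 1 = m := by omega
          rw [hkm] at h1
          refine ⟨0, hm_pos, ?_⟩
          simpa using hmit.symm.trans h1
      -- the index function
      have hidx : ∀ x : α, ∃ k : ℕ, x ∈ O → (k < m ∧ g^[k] v₀ = x) := by
        intro x
        by_cases hx : x ∈ O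
        · obtain ⟨k, hk1, hk2⟩ := hx
          exact ⟨k, fun _ => ⟨hk1, hk2⟩⟩
        · exact ⟨0, fun h => absurd h hx⟩
      choose idx hidx' using hidx
      have idx_lt : ∀ x ∈ O, idx x < m := fun x hx => (hidx' x hx).1
      have idx_it : ∀ x ∈ O, g^[idx x] v₀ = x := fun x hx => (hidx' x hx).2
      have idx_uniq : ∀ k, k < m → idx (g^[k] v₀) = k := by
        intro k hk
        have hmem : g^[k] v₀ ∈ O := ⟨k, hk, rfl⟩
        exact Function.iterate_injOn_Iio_minimalPeriod (idx_lt _ hmem) hk (idx_it _ hmem)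
      have idx_v₀ : idx v₀ = 0 := by
        have := idx_uniq 0 hm_pos
        simpa using this
      -- the subtype
      have hcard' : Fintype.card {x // x ∉ O} ≤ n := by
        have : Fintype.card {x // x ∉ O} < Fintype.card α :=
          Fintype.card_subtype_lt (x := v₀) (by simpa using hv₀O)
        omega
      obtain ⟨f', hf'⟩ := ih {x // x ∉ O} (fun x => ⟨g x.1, fun h => x.2 (hO_pre _ h)⟩) hcard'
      refine ⟨fun x => if hx : x ∈ O then
          (if idx x = m - 1 then (2 : Fin 3) else ⟨idx x % 2, by omega⟩)
        else f' ⟨x, hx⟩, ?_⟩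
      intro v hgv
      by_cases hv : v ∈ O
      · have hgvO : g v ∈ O := hO_g v hv
        simp only [dif_pos hv, dif_pos hgvO]
        by_cases hk : idx v = m - 1
        · have h1 : g^[idx v + 1] v₀ = g (g^[idx v] v₀) := Function.iterate_succ_apply' g (idx v) v₀
          rw [idx_it v hv, hk, show m-1+1 = m from by omega] at h1
          have hgv0 : g v = v₀ := h1.symm.trans hmit
          simp only [if_pos hk, hgv0, idx_v₀]
          have h0 : (0 : ℕ) ≠ m - 1 := by omega
          rw [if_neg h0]
          intro hcon
          have := congrArg Fin.val hcon
          simp at this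
        · have hlt : idx v + 1 < m := by
            have := idx_lt v hv; omega
          have hgidx : idx (g v) = idx v + 1 := by
            have h1 : g^[idx v + 1] v₀ = g (g^[idx v] v₀) := Function.iterate_succ_apply' g (idx v) v₀
            rw [idx_it v hv] at h1
            rw [← h1, idx_uniq _ hlt]
          simp only [if_neg hk, hgidx]
          by_cases hk2 : idx v + 1 = m - 1
          · rw [if_pos hk2]
            intro hcon
            have := congrArg Fin.val hcon
            simp at this
            omega
          · rw [if_neg hk2]
            intro hcon
            have := congrArg Fin.val hcon
            simp at this
            omega
      · have hgvO : g v ∉ O := fun h => hv (hO_pre _ h)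
        simp only [dif_neg hv, dif_neg hgvO]
        exact hf' ⟨v, hv⟩ (fun h => hgv (congrArg Subtype.val h))
    · -- not surjective: remove a vertex outside the range
      rw [Function.Surjective] at hsurj
      push_neg at hsurj
      obtain ⟨v₀, hv₀⟩ := hsurj
      have hgv₀ : ∀ x, g x ≠ v₀ := fun x h => hv₀ x h
      have hcard' : Fintype.card {x // x ≠ v₀} ≤ n := by
        have : Fintype.card {x // x ≠ v₀} < Fintype.card α :=
          Fintype.card_subtype_lt (x := v₀) (by simp)
        omega
      obtain ⟨f', hf'⟩ := ih {x // x ≠ v₀} (fun x => ⟨g x.1, hgv₀ x.1⟩) hcard'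
      refine ⟨fun x => if hx : x = v₀ then
          (if f' ⟨g v₀, hgv₀ v₀⟩ = 0 then 1 else 0) else f' ⟨x, hx⟩, ?_⟩
      intro v hgv
      by_cases hv : v = v₀
      · subst hv
        simp only []
        rw [dif_pos trivial, dif_neg (hgv₀ v)]
        split
        · intro hcon; rename_i h0; rw [h0] at hcon; exact absurd hcon.symm (by decide)
        · rename_i h0; exact fun hcon => h0 hcon.symm
      · simp only []
        rw [dif_neg hv, dif_neg (hgv₀ v)]
        exact hf' ⟨v, hv⟩ (fun h => hgv (congrArg Subtype.val h))


/-- If `S` is a set of inner vertices of `G^{3/3}` such that every branch vertex `v` has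
at most `t` of its adjacent (in `G^{1/3}`) inner vertices in `S`, then the subgraph of
`G^{3/3}` induced on `S` is properly `3t`-colourable. -/
theorem recolouring_with_three_t_colours {V : Type} [Fintype V] (G : SimpleGraph V)
    [DecidableRel G.Adj] (hΔ : 2 ≤ G.maxDegree) (t : ℕ) (S : Set (SubdivV G 3))
    (hinner : ∀ x ∈ S, ∃ q : SubdivInner G 3, x = Sum.inr q)
    (ht : ∀ v : V,
      {q : SubdivInner G 3 | Sum.inr q ∈ S ∧
        (subdivision G 3).Adj (Sum.inl v) (Sum.inr q)}.ncard ≤ t) :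
    ((gpow (subdivision G 3) 3).induce S).Colorable (3 * t) := by
  classical
  haveI : Finite (SubdivPre G 3) := by
    refine Finite.of_injective
      (fun p => ((p.u, p.w), (⟨p.i, by have := p.hi2; omega⟩ : Fin 3))) ?_
    intro p q h
    simp only [Prod.mk.injEq, Fin.mk.injEq] at h
    exact SubdivPre.ext' h.1.1 h.1.2 h.2
  haveI : Finite (SubdivInner G 3) := Quot.finite _
  set A : V → Set (SubdivInner G 3) := fun v => {q | Sum.inr q ∈ S ∧ ihead q = v} with hAdef
  have hA : ∀ v, (A v).ncard ≤ t := by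
    intro v
    have heq : A v = {q : SubdivInner G 3 | Sum.inr q ∈ S ∧
        (subdivision G 3).Adj (Sum.inl v) (Sum.inr q)} := by
      ext q
      simp only [hAdef, Set.mem_setOf_eq, and_congr_right_iff]
      intro _
      constructor
      · intro h
        exact ⟨Sum.inl_ne_inr, branch_inner_iff.mpr h⟩
      · intro h
        exact branch_inner_iff.mp h.2
    rw [heq]
    exact ht v
  -- choose injective labels on each in-neighbourhood
  have hlab : ∀ v : V, ∃ jf : SubdivInner G 3 → ℕ,
      Set.InjOn jf (A v) ∧ ∀ q ∈ A v, jf q < t := by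
    intro v
    haveI : Fintype (A v) := Fintype.ofFinite _
    have hcard : Fintype.card (A v) ≤ t := by
      rw [← Nat.card_eq_fintype_card, Nat.card_coe_set_eq]
      exact hA v
    set e := Fintype.equivFin (A v) with he
    refine ⟨fun q => if h : q ∈ A v then (e ⟨q, h⟩ : ℕ) else 0, ?_, ?_⟩
    · intro x hx y hy hxy
      simp only [] at hxy
      rw [dif_pos hx, dif_pos hy] at hxy
      have h2 := e.injective (Fin.val_injective hxy)
      exact congrArg Subtype.val h2
    · intro q hq
      simp only []
      rw [dif_pos hq]
      exact lt_of_lt_of_le (e ⟨q, hq⟩).2 hcard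
  choose jv hjvinj hjvlt using hlab
  set label : SubdivInner G 3 → ℕ := fun q => jv (ihead q) q with hlabel
  have label_inj : ∀ {q q' : SubdivInner G 3}, Sum.inr q ∈ S → Sum.inr q' ∈ S →
      ihead q = ihead q' → label q = label q' → q = q' := by
    intro q q' hq hq' hh hl
    have h1 : q ∈ A (ihead q) := ⟨hq, rfl⟩
    have h2 : q' ∈ A (ihead q) := ⟨hq', hh.symm⟩
    apply hjvinj (ihead q) h1 h2
    simp only [hlabel] at hl
    rw [← hh] at hl
    exact hl
  -- the functional graphs, one for each label value
  have hgdef : ∀ (jj : ℕ) (y : V), ∃ z : V,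
      ∀ q, Sum.inr q ∈ S → ihead q = y → label q = jj → z = itail q := by
    intro jj y
    by_cases h : ∃ q, Sum.inr q ∈ S ∧ ihead q = y ∧ label q = jj
    · obtain ⟨q0, hq0S, hq0h, hq0l⟩ := h
      refine ⟨itail q0, ?_⟩
      intro q hS hh hl
      rw [label_inj hq0S hS (hq0h.trans hh.symm) (hq0l.trans hl.symm)]
    · exact ⟨y, fun q hS hh hl => absurd ⟨q, hS, hh, hl⟩ h⟩
  choose gg hgg using hgdef
  -- 3-colour each functional graph
  have hcol : ∀ jj : ℕ, ∃ f : V → Fin 3, ∀ v, gg jj v ≠ v → f v ≠ f (gg jj v) :=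
    fun jj => funcol_aux (Fintype.card V) V (gg jj) le_rfl
  choose ff hff using hcol
  -- extract inner vertices
  have htoQ : ∀ s : ↥S, ∃ q : SubdivInner G 3, (s : SubdivV G 3) = Sum.inr q :=
    fun s => hinner s s.2
  choose toQ htoQ' using htoQ
  have hQS : ∀ s : ↥S, Sum.inr (toQ s) ∈ S := fun s => (htoQ' s) ▸ s.2
  -- the colouring
  have hbound : ∀ s : ↥S, label (toQ s) < t :=
    fun s => hjvlt (ihead (toQ s)) (toQ s) ⟨hQS s, rfl⟩
  set color : ↥S → Fin t × Fin 3 := fun s =>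
    (⟨label (toQ s), hbound s⟩, ff (label (toQ s)) (ihead (toQ s))) with hcolor
  have hvalid : ∀ {a b : ↥S}, ((gpow (subdivision G 3) 3).induce S).Adj a b →
      color a ≠ color b := by
    intro s s' hadj heq
    have hadj' : (gpow (subdivision G 3) 3).Adj (s : SubdivV G 3) (s' : SubdivV G 3) := hadj
    rw [htoQ' s, htoQ' s'] at hadj'
    obtain ⟨hne, hconf⟩ := cube_conflict hadj'
    have h1 : label (toQ s) = label (toQ s') := by
      have := congrArg Prod.fst heq
      simpa [hcolor] using congrArg Fin.val this
    have h2 : ff (label (toQ s)) (ihead (toQ s)) =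
        ff (label (toQ s')) (ihead (toQ s')) := congrArg Prod.snd heq
    set q := toQ s
    set q' := toQ s'
    rcases hconf with hh | hh | hh
    · exact hne (label_inj (hQS s) (hQS s') hh h1)
    · -- ihead q = itail q'
      have hgval : gg (label q') (ihead q') = itail q' :=
        hgg (label q') (ihead q') q' (hQS s') rfl rfl
      have hne2 : gg (label q') (ihead q') ≠ ihead q' := by
        rw [hgval]; exact (ihead_ne_itail q').symm
      have hf := hff (label q') (ihead q') hne2
      rw [hgval] at hf
      rw [h1, hh] at h2
      exact hf h2.symm
    · -- ihead q' = itail q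
      have hgval : gg (label q) (ihead q) = itail q :=
        hgg (label q) (ihead q) q (hQS s) rfl rfl
      have hne2 : gg (label q) (ihead q) ≠ ihead q := by
        rw [hgval]; exact (ihead_ne_itail q).symm
      have hf := hff (label q) (ihead q) hne2
      rw [hgval] at hf
      rw [← h1] at h2
      rw [hh] at h2
      exact hf h2
  have C : ((gpow (subdivision G 3) 3).induce S).Coloring (Fin t × Fin 3) :=
    SimpleGraph.Coloring.mk color hvalid
  have := C.colorable
  simpa [Nat.mul_comm] using this
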